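/- Let Q(t) ∈ ℤ[t] be monic of degree r with Q mod 2 irreducible over ℤ/2 and odd constant coefficient, and let λ be the multiplicative order of t in (ℤ/2)[t]/(Q). Then t^λ ≡ −1 (mod 4, Q) if and only if Q(t) satisfies Condition S. -/

import Mathlib

open Polynomial

/-- Condition S: `Q(t)² + Q(−t)² ≡ 2·q_r·Q(t²) (mod 8)` where `q_r` is the leading
coefficient of `Q`. -/
def conditionS (Q : Polynomial ℤ) : Prop :=
  (Q ^ 2 + (Q.comp (-X)) ^ 2).map (Int.castRingHom (ZMod 8)) =
    (C (2 * Q.leadingCoeff) * Q.comp (X ^ 2)).map (Int.castRingHom (ZMod 8))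


private lemma map_zmod_eq_zero_iff (n : ℕ) [NeZero n] (p : Polynomial ℤ) :
    p.map (Int.castRingHom (ZMod n)) = 0 ↔ ∃ q, p = C (n : ℤ) * q := by
  constructor
  · intro h0
    have h : ∀ i, (n : ℤ) ∣ p.coeff i := by
      intro i
      have := congrArg (fun f => Polynomial.coeff f i) h0
      simp only [coeff_map, coeff_zero] at this
      exact_mod_cast (ZMod.intCast_zmod_eq_zero_iff_dvd _ n).mp this
    refine ⟨p.sum fun i a => C (a / n) * X ^ i, ?_⟩
    conv_lhs => rw [← p.sum_C_mul_X_pow_eq]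
    rw [Polynomial.sum, Polynomial.sum, Finset.mul_sum]
    refine Finset.sum_congr rfl fun i _ => ?_
    rw [← mul_assoc, ← C_mul, Int.mul_ediv_cancel' (h i)]
  · rintro ⟨q, rfl⟩
    simp [Polynomial.map_mul]


private lemma map2_C (a : ℤ) :
    (C a : Polynomial ℤ).map (Int.castRingHom (ZMod 2)) = C ((a : ZMod 2)) := by
  simp [Polynomial.map_C]

private lemma surj2 : Function.Surjective ⇑(Int.castRingHom (ZMod 2)) :=
  fun y => ZMod.intCast_surjective y

private lemma lift_of_mem_span (Q p : Polynomial ℤ)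
    (h : p.map (Int.castRingHom (ZMod 2)) ∈
      Ideal.span {Q.map (Int.castRingHom (ZMod 2))}) :
    ∃ b c, p = Q * b + C 2 * c := by
  rw [Ideal.mem_span_singleton] at h
  obtain ⟨cb, hcb⟩ := h
  obtain ⟨b, rfl⟩ := Polynomial.map_surjective _ surj2 cb
  have : (p - Q * b).map (Int.castRingHom (ZMod 2)) = 0 := by
    rw [Polynomial.map_sub, Polynomial.map_mul, hcb, sub_self]
  obtain ⟨c, hc⟩ := (map_zmod_eq_zero_iff 2 _).mp this
  exact ⟨b, c, by push_cast at hc; linear_combination hc⟩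

private lemma mem_span_of_lift (Q p : Polynomial ℤ) (b c : Polynomial ℤ)
    (h : p = Q * b + C 2 * c) :
    p.map (Int.castRingHom (ZMod 2)) ∈
      Ideal.span {Q.map (Int.castRingHom (ZMod 2))} := by
  subst h
  rw [Ideal.mem_span_singleton, Polynomial.map_add, Polynomial.map_mul, Polynomial.map_mul,
    map2_C]
  have h2 : ((2 : ℤ) : ZMod 2) = 0 := by decide
  rw [h2, C_0, zero_mul, add_zero]
  exact dvd_mul_right _ _

private lemma two_mul_mem_iff (Q : Polynomial ℤ)
    (hQb : Q.map (Int.castRingHom (ZMod 2)) ≠ 0) (p : Polynomial ℤ) :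
    C 2 * p ∈ Ideal.span ({C 4, Q} : Set (Polynomial ℤ)) ↔
      p.map (Int.castRingHom (ZMod 2)) ∈
        Ideal.span {Q.map (Int.castRingHom (ZMod 2))} := by
  have h2 : ((2 : ℤ) : ZMod 2) = 0 := by decide
  have h4 : ((4 : ℤ) : ZMod 2) = 0 := by decide
  constructor
  · intro h
    rw [Ideal.mem_span_pair] at h
    obtain ⟨u, v, huv⟩ := h
    have hvQ : v * Q = C 2 * p - C 4 * u := by linear_combination huv
    have h0 : (v * Q).map (Int.castRingHom (ZMod 2)) = 0 := by
      rw [hvQ, Polynomial.map_sub, Polynomial.map_mul, Polynomial.map_mul, map2_C, map2_C,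
        h2, h4, C_0, zero_mul, zero_mul, sub_zero]
    rw [Polynomial.map_mul] at h0
    have hv0 : v.map (Int.castRingHom (ZMod 2)) = 0 :=
      (mul_eq_zero.mp h0).resolve_right hQb
    obtain ⟨v', hv'⟩ := (map_zmod_eq_zero_iff 2 _).mp hv0
    push_cast at hv'
    have hC2 : (C 2 : Polynomial ℤ) ≠ 0 := by simp
    have hp : p = C 2 * u + v' * Q := by
      apply mul_left_cancel₀ hC2
      have hC4 : (C 4 : Polynomial ℤ) = C 2 * C 2 := by rw [← C_mul]; norm_num
      rw [← huv, hv', hC4]; ring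
    exact mem_span_of_lift Q p v' u (by rw [hp]; ring)
  · intro h
    obtain ⟨b, c, hbc⟩ := lift_of_mem_span Q p h
    rw [Ideal.mem_span_pair]
    refine ⟨c, C 2 * b, ?_⟩
    have hC4 : (C 4 : Polynomial ℤ) = C 2 * C 2 := by rw [← C_mul]; norm_num
    rw [hbc, hC4]; ring

noncomputable def evenP (Q : Polynomial ℤ) : Polynomial ℤ :=
  ∑ i ∈ Finset.range (Q.natDegree + 1), C (Q.coeff (2 * i)) * X ^ i

noncomputable def oddP (Q : Polynomial ℤ) : Polynomial ℤ :=
  ∑ i ∈ Finset.range (Q.natDegree + 1), C (Q.coeff (2 * i + 1)) * X ^ i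

private lemma evenP_coeff (Q : Polynomial ℤ) (j : ℕ) :
    (evenP Q).coeff j = Q.coeff (2 * j) := by
  unfold evenP
  rw [finset_sum_coeff]
  simp only [coeff_C_mul, coeff_X_pow, mul_ite, mul_one, mul_zero]
  rw [Finset.sum_ite_eq (Finset.range (Q.natDegree + 1)) j (fun i => Q.coeff (2 * i))]
  split_ifs with h
  · rfl
  · rw [Finset.mem_range, not_lt] at h
    rw [coeff_eq_zero_of_natDegree_lt]
    omega

private lemma oddP_coeff (Q : Polynomial ℤ) (j : ℕ) :
    (oddP Q).coeff j = Q.coeff (2 * j + 1) := by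
  unfold oddP
  rw [finset_sum_coeff]
  simp only [coeff_C_mul, coeff_X_pow, mul_ite, mul_one, mul_zero]
  rw [Finset.sum_ite_eq (Finset.range (Q.natDegree + 1)) j (fun i => Q.coeff (2 * i + 1))]
  split_ifs with h
  · rfl
  · rw [Finset.mem_range, not_lt] at h
    rw [coeff_eq_zero_of_natDegree_lt]
    omega

private lemma decompQ (Q : Polynomial ℤ) :
    Q = expand ℤ 2 (evenP Q) + X * expand ℤ 2 (oddP Q) := by
  ext n
  rw [coeff_add]
  rcases Nat.even_or_odd n with ⟨k, hk⟩ | ⟨k, hk⟩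
  · have hn : n = 2 * k := by omega
    subst hn
    rw [coeff_expand_mul' two_pos, evenP_coeff]
    rcases Nat.eq_zero_or_pos k with rfl | hk0
    · simp only [Nat.mul_zero, mul_coeff_zero, coeff_X_zero, zero_mul, add_zero]
    · have h2k : 2 * k = (2 * k - 1) + 1 := by omega
      rw [h2k, coeff_X_mul, coeff_expand two_pos]
      rw [if_neg (by omega)]
      rw [add_zero]
  · have hn : n = 2 * k + 1 := by omega
    subst hn
    rw [coeff_X_mul, coeff_expand_mul' two_pos, oddP_coeff, coeff_expand two_pos,
      if_neg (by omega), zero_add]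

private lemma expand_comp_neg (p : Polynomial ℤ) :
    (expand ℤ 2 p).comp (-X) = expand ℤ 2 p := by
  rw [expand_eq_comp_X_pow, comp_assoc]
  congr 1
  rw [pow_comp, X_comp]
  ring

private lemma compQ_neg (Q : Polynomial ℤ) :
    Q.comp (-X) = expand ℤ 2 (evenP Q) - X * expand ℤ 2 (oddP Q) := by
  conv_lhs => rw [decompQ Q]
  rw [add_comp, mul_comp, X_comp, expand_comp_neg, expand_comp_neg]
  ring

private lemma natDegree_sq_sub_expand_le (p : Polynomial ℤ) :
    (p ^ 2 - expand ℤ 2 p).natDegree ≤ 2 * p.natDegree := by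
  refine le_trans (natDegree_sub_le _ _) ?_
  rw [natDegree_expand, natDegree_pow]
  omega

private lemma natDegree_sq_sub_expand_monic {p : Polynomial ℤ} (hm : p.Monic) :
    (p ^ 2 - expand ℤ 2 p).natDegree ≤ 2 * p.natDegree - 1 := by
  rcases Nat.eq_zero_or_pos p.natDegree with h0 | h1
  · have hp1 : p = 1 := by
      have hc := eq_C_of_natDegree_eq_zero h0
      rwa [← h0, ← leadingCoeff, hm.leadingCoeff, map_one] at hc
    simp [hp1]
  by_cases hz : p ^ 2 - expand ℤ 2 p = 0
  · rw [hz, natDegree_zero]; omega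
  have hdeg : (expand ℤ 2 p).degree = (p ^ 2).degree := by
    rw [degree_eq_natDegree (hm.expand two_pos).ne_zero,
      degree_eq_natDegree (hm.pow 2).ne_zero, natDegree_expand, natDegree_pow]
    norm_cast
    ring
  have hlc : (p ^ 2).leadingCoeff = (expand ℤ 2 p).leadingCoeff := by
    rw [(hm.pow 2).leadingCoeff, (hm.expand two_pos).leadingCoeff]
  have := degree_sub_lt hdeg.symm (hm.pow 2).ne_zero hlc
  rw [degree_eq_natDegree (hm.pow 2).ne_zero, natDegree_pow] at this
  have hnat : (p ^ 2 - expand ℤ 2 p).natDegree < 2 * p.natDegree := by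
    rwa [natDegree_lt_iff_degree_lt hz]
  omega

private lemma natDegree_F_sub_Q (Q : Polynomial ℤ) (hmonic : Q.Monic)
    (hr1 : 1 ≤ Q.natDegree) :
    ((evenP Q) ^ 2 + X * (oddP Q) ^ 2 - Q).natDegree < Q.natDegree := by
  set r := Q.natDegree with hrdef
  set E := evenP Q
  set O := oddP Q
  have key : (evenP Q) ^ 2 + X * (oddP Q) ^ 2 - Q
      = (E ^ 2 - expand ℤ 2 E) + X * (O ^ 2 - expand ℤ 2 O) := by
    have h := decompQ Q
    linear_combination -h
  rw [key]
  have hE_le : E.natDegree ≤ r / 2 := by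
    rw [natDegree_le_iff_coeff_eq_zero]
    intro j hj
    rw [evenP_coeff]
    exact coeff_eq_zero_of_natDegree_lt (by omega)
  have hO_le : O.natDegree ≤ (r - 1) / 2 := by
    rw [natDegree_le_iff_coeff_eq_zero]
    intro j hj
    rw [oddP_coeff]
    exact coeff_eq_zero_of_natDegree_lt (by omega)
  have hQtop : Q.coeff r = 1 := hmonic.coeff_natDegree
  refine lt_of_le_of_lt (natDegree_add_le _ _) (max_lt ?_ ?_)
  · rcases Nat.even_or_odd r with he | ho
    · -- r even : E is monic of degree r / 2
      obtain ⟨k, hk⟩ := he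
      have h2 : 2 * (r / 2) = r := by omega
      have hEc : E.coeff (r / 2) = 1 := by rw [evenP_coeff, h2, hQtop]
      have hEd : E.natDegree = r / 2 :=
        le_antisymm hE_le (le_natDegree_of_ne_zero (by rw [hEc]; norm_num))
      have hEm : E.Monic := by
        rw [Monic, leadingCoeff, hEd, hEc]
      have := natDegree_sq_sub_expand_monic hEm
      omega
    · obtain ⟨k, hk⟩ := ho
      have := natDegree_sq_sub_expand_le E
      omega
  · by_cases hz : O ^ 2 - expand ℤ 2 O = 0
    · rw [hz, mul_zero, natDegree_zero]; omega
    rcases Nat.even_or_odd r with he | ho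
    · obtain ⟨k, hk⟩ := he
      have := natDegree_sq_sub_expand_le O
      refine lt_of_le_of_lt (natDegree_mul_le) ?_
      rw [natDegree_X]
      omega
    · -- r odd : O is monic of degree (r - 1) / 2
      obtain ⟨k, hk⟩ := ho
      have h2 : 2 * ((r - 1) / 2) + 1 = r := by omega
      have hOc : O.coeff ((r - 1) / 2) = 1 := by rw [oddP_coeff, h2, hQtop]
      have hOd : O.natDegree = (r - 1) / 2 :=
        le_antisymm hO_le (le_natDegree_of_ne_zero (by rw [hOc]; norm_num))
      have hOm : O.Monic := by
        rw [Monic, leadingCoeff, hOd, hOc]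
      have hO1 : 1 ≤ O.natDegree := by
        rcases Nat.eq_zero_or_pos O.natDegree with h0 | h1
        · exfalso
          apply hz
          have hc := eq_C_of_natDegree_eq_zero h0
          rw [← h0, ← leadingCoeff, hOm.leadingCoeff, map_one] at hc
          rw [hc]
          simp [map_one]
        · exact h1
      have := natDegree_sq_sub_expand_monic hOm
      refine lt_of_le_of_lt (natDegree_mul_le) ?_
      rw [natDegree_X]
      omega

private lemma frob2 (p : Polynomial (ZMod 2)) : expand (ZMod 2) 2 p = p ^ 2 := by
  have h := map_frobenius_expand 2 p
  rwa [ZMod.frobenius_zmod, Polynomial.map_id] at h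

private lemma F_sub_Q_map2 (Q : Polynomial ℤ) :
    ((evenP Q) ^ 2 + X * (oddP Q) ^ 2 - Q).map (Int.castRingHom (ZMod 2)) = 0 := by
  have hdq := congrArg (Polynomial.map (Int.castRingHom (ZMod 2))) (decompQ Q)
  rw [Polynomial.map_add, Polynomial.map_mul, map_X, map_expand, map_expand, frob2, frob2]
    at hdq
  rw [Polynomial.map_sub, Polynomial.map_add, Polynomial.map_mul, Polynomial.map_pow,
    Polynomial.map_pow, map_X]
  rw [hdq]
  ring

private lemma two_mul_map8 (p : Polynomial ℤ) :
    (C 2 * p).map (Int.castRingHom (ZMod 8)) = 0 ↔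
      p.map (Int.castRingHom (ZMod 4)) = 0 := by
  rw [map_zmod_eq_zero_iff, map_zmod_eq_zero_iff]
  constructor
  · rintro ⟨q, hq⟩
    refine ⟨q, mul_left_cancel₀ (show (C 2 : Polynomial ℤ) ≠ 0 by simp) ?_⟩
    rw [hq, ← mul_assoc, ← C_mul]
    norm_num
  · rintro ⟨q, rfl⟩
    refine ⟨q, ?_⟩
    rw [← mul_assoc, ← C_mul]
    norm_num

private lemma conditionS_iff (Q : Polynomial ℤ) (hmonic : Q.Monic) :
    conditionS Q ↔
      ((evenP Q) ^ 2 + X * (oddP Q) ^ 2 - Q).map (Int.castRingHom (ZMod 4)) = 0 := by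
  have h1 := decompQ Q
  have h2 := compQ_neg Q
  set E := evenP Q
  set O := oddP Q
  have hexp : expand ℤ 2 (E ^ 2 + X * O ^ 2) =
      (expand ℤ 2 E) ^ 2 + X ^ 2 * (expand ℤ 2 O) ^ 2 := by
    rw [map_add, map_mul, map_pow, map_pow, expand_X]
  have hC2 : (C (2:ℤ) : Polynomial ℤ) = 2 := map_ofNat C 2
  have hkey : Q ^ 2 + (Q.comp (-X)) ^ 2 = C 2 * expand ℤ 2 (E ^ 2 + X * O ^ 2) := by
    rw [hexp, hC2]
    linear_combination (Q + expand ℤ 2 E + X * expand ℤ 2 O) * h1 +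
      (Q.comp (-X) + expand ℤ 2 E - X * expand ℤ 2 O) * h2
  have hrhs : C (2 * Q.leadingCoeff) * Q.comp (X ^ 2) = C 2 * expand ℤ 2 Q := by
    rw [hmonic.leadingCoeff, mul_one, expand_eq_comp_X_pow]
  rw [conditionS, hkey, hrhs, ← sub_eq_zero, ← Polynomial.map_sub, ← mul_sub, ← map_sub,
    two_mul_map8, map_expand]
  exact expand_eq_zero two_pos

private lemma frob2_pow (j : ℕ) (p : Polynomial (ZMod 2)) :
    expand (ZMod 2) (2 ^ j) p = p ^ (2 ^ j) := by
  induction j with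
  | zero => simp [expand_one]
  | succ n ih =>
    have h : (2 : ℕ) ^ (n + 1) = 2 ^ n * 2 := by ring
    rw [h, ← expand_expand, frob2, map_pow, ih, ← pow_mul]

private lemma mul_mem_I (Q p q : Polynomial ℤ)
    (hp : p.map (Int.castRingHom (ZMod 2)) ∈
      Ideal.span {Q.map (Int.castRingHom (ZMod 2))})
    (hq : q.map (Int.castRingHom (ZMod 2)) ∈
      Ideal.span {Q.map (Int.castRingHom (ZMod 2))}) :
    p * q ∈ Ideal.span ({C 4, Q} : Set (Polynomial ℤ)) := by
  obtain ⟨b, c, hp'⟩ := lift_of_mem_span Q p hp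
  obtain ⟨d, e, hq'⟩ := lift_of_mem_span Q q hq
  rw [Ideal.mem_span_pair]
  refine ⟨c * e, Q * (b * d) + C 2 * (b * e + c * d), ?_⟩
  have hC4 : (C 4 : Polynomial ℤ) = C 2 * C 2 := by rw [← C_mul]; norm_num
  rw [hp', hq', hC4]
  ring

private lemma A_expand_mem (Q : Polynomial ℤ) (k : ℕ) (hk : 1 ≤ k) :
    expand ℤ (2 ^ k) ((evenP Q) ^ 2 - X * (oddP Q) ^ 2) ∈
      Ideal.span ({C 4, Q} : Set (Polynomial ℤ)) := by
  have h1 := decompQ Q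
  have h2 := compQ_neg Q
  set E := evenP Q with hE
  set O := oddP Q with hO
  have hA : expand ℤ 2 (E ^ 2 - X * O ^ 2) = Q * Q.comp (-X) := by
    rw [map_sub, map_mul, map_pow, map_pow, expand_X, h2, h1]
    ring
  have hsplit : expand ℤ (2 ^ k) (E ^ 2 - X * O ^ 2)
      = expand ℤ (2 ^ (k - 1)) Q * expand ℤ (2 ^ (k - 1)) (Q.comp (-X)) := by
    have h2k : (2 : ℕ) ^ k = 2 ^ (k - 1) * 2 := by
      rcases Nat.exists_eq_add_of_le hk with ⟨j, rfl⟩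
      rw [show 1 + j - 1 = j from by omega, pow_add, pow_one]
      ring
    rw [h2k, ← expand_expand, hA, map_mul]
  rw [hsplit]
  have hQpow : (expand ℤ (2 ^ (k - 1)) Q).map (Int.castRingHom (ZMod 2)) ∈
      Ideal.span {Q.map (Int.castRingHom (ZMod 2))} := by
    rw [map_expand, frob2_pow]
    exact Ideal.mem_span_singleton.mpr (dvd_pow_self _ (Nat.pos_of_ne_zero (by positivity)).ne')
  have hQcpow : (expand ℤ (2 ^ (k - 1)) (Q.comp (-X))).map (Int.castRingHom (ZMod 2)) ∈
      Ideal.span {Q.map (Int.castRingHom (ZMod 2))} := by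
    rw [map_expand, Polynomial.map_comp]
    have hneg : ((-X : Polynomial ℤ).map (Int.castRingHom (ZMod 2))) = X := by
      rw [Polynomial.map_neg, map_X]
      exact CharTwo.neg_eq X
    rw [hneg, comp_X, frob2_pow]
    exact Ideal.mem_span_singleton.mpr (dvd_pow_self _ (Nat.pos_of_ne_zero (by positivity)).ne')
  exact mul_mem_I Q _ _ hQpow hQcpow

private lemma K_facts (Q : Polynomial ℤ) (r : ℕ) (hr : Q.natDegree = r)
    (hmonic : Q.Monic) (hconst : Odd (Q.coeff 0))
    (hirr : Irreducible (Q.map (Int.castRingHom (ZMod 2))))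
    (lam : ℕ)
    (hlam : lam = orderOf (Ideal.Quotient.mk
      (Ideal.span {Q.map (Int.castRingHom (ZMod 2))}) (X : Polynomial (ZMod 2)))) :
    ∃ m : ℕ, Odd lam ∧ Odd m ∧ lam * m + 1 = 2 ^ r ∧
      ((X : Polynomial (ZMod 2)) ^ lam - 1) ∈
        Ideal.span {Q.map (Int.castRingHom (ZMod 2))} := by
  set Qb : Polynomial (ZMod 2) := Q.map (Int.castRingHom (ZMod 2)) with hQb
  have hQbm : Qb.Monic := hmonic.map _
  have hQbd : Qb.natDegree = r := by rw [hQb, hmonic.natDegree_map, hr]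
  have hr1 : 1 ≤ r := by
    have := hirr.natDegree_pos
    omega
  -- K := AdjoinRoot Qb is a finite field with 2 ^ r elements
  haveI : Fact (Irreducible Qb) := ⟨hirr⟩
  letI : Field (AdjoinRoot Qb) := AdjoinRoot.instField
  let pb := AdjoinRoot.powerBasis' hQbm
  haveI : Module.Finite (ZMod 2) (AdjoinRoot Qb) := Module.Finite.of_basis pb.basis
  haveI : Finite (AdjoinRoot Qb) := Module.finite_of_finite (ZMod 2)
  haveI : Fintype (AdjoinRoot Qb) := Fintype.ofFinite _
  have hcard : Fintype.card (AdjoinRoot Qb) = 2 ^ r := by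
    rw [Module.card_fintype pb.basis, ZMod.card, Fintype.card_fin]
    congr 1
  -- the root is nonzero
  have hc0 : Qb.coeff 0 = 1 := by
    obtain ⟨j, hj⟩ := hconst
    rw [hQb, coeff_map]
    show ((Q.coeff 0 : ℤ) : ZMod 2) = 1
    rw [hj]
    push_cast
    rw [show ((2 : ZMod 2)) = 0 from rfl]
    ring
  have hroot_ne : AdjoinRoot.root Qb ≠ 0 := by
    intro h0
    have := AdjoinRoot.eval₂_root Qb
    rw [h0, eval₂_at_zero, hc0, map_one] at this
    exact one_ne_zero this
  -- order facts
  have hpow : (AdjoinRoot.root Qb) ^ (2 ^ r) = AdjoinRoot.root Qb := by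
    rw [← hcard]
    exact FiniteField.pow_card _
  have hpow1 : (AdjoinRoot.root Qb) ^ (2 ^ r - 1) = 1 := by
    have h1 : (AdjoinRoot.root Qb) ^ (2 ^ r - 1) * AdjoinRoot.root Qb
        = 1 * AdjoinRoot.root Qb := by
      rw [← pow_succ]
      rw [show 2 ^ r - 1 + 1 = 2 ^ r from by
        have : 1 ≤ 2 ^ r := Nat.one_le_two_pow
        omega]
      rw [hpow, one_mul]
    exact mul_right_cancel₀ hroot_ne h1
  have hlam' : lam = orderOf (AdjoinRoot.root Qb) := hlam
  have hdvd : lam ∣ 2 ^ r - 1 := by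
    rw [hlam']
    exact orderOf_dvd_of_pow_eq_one hpow1
  obtain ⟨m, hm⟩ := hdvd
  have hodd : Odd (2 ^ r - 1) := by
    have h2 : 2 ^ r = 2 * 2 ^ (r - 1) := by
      rcases Nat.exists_eq_add_of_le hr1 with ⟨j, rfl⟩
      rw [show 1 + j - 1 = j from by omega, pow_add, pow_one]
    have h1 : 1 ≤ 2 ^ r := Nat.one_le_two_pow
    set N := 2 ^ r with hN
    set M := 2 ^ (r - 1) with hM
    rcases Nat.even_or_odd (N - 1) with he | ho
    · exfalso
      obtain ⟨k, hk⟩ := he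
      omega
    · exact ho
  rw [hm] at hodd
  have hlam_odd : Odd lam := (Nat.odd_mul.mp hodd).1
  have hm_odd : Odd m := (Nat.odd_mul.mp hodd).2
  refine ⟨m, hlam_odd, hm_odd, ?_, ?_⟩
  · have h1 : 1 ≤ 2 ^ r := Nat.one_le_two_pow
    omega
  · have hx : (AdjoinRoot.root Qb) ^ lam = 1 := by
      rw [hlam']
      exact pow_orderOf_eq_one _
    have : AdjoinRoot.mk Qb (X ^ lam - 1) = 0 := by
      rw [map_sub, map_pow, AdjoinRoot.mk_X, map_one, hx, sub_self]
    rw [AdjoinRoot.mk_eq_zero] at this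
    exact Ideal.mem_span_singleton.mpr this

private lemma S_iff_mem (Q : Polynomial ℤ) (hmonic : Q.Monic)
    (hirr : Irreducible (Q.map (Int.castRingHom (ZMod 2)))) :
    conditionS Q ↔
      (evenP Q) ^ 2 + X * (oddP Q) ^ 2 - Q ∈
        Ideal.span ({C 4, Q} : Set (Polynomial ℤ)) := by
  have hr1 : 1 ≤ Q.natDegree := by
    have h := hirr.natDegree_pos
    rw [hmonic.natDegree_map] at h
    omega
  have hC4 : (C 4 : Polynomial ℤ) = C 2 * C 2 := by rw [← C_mul]; norm_num
  rw [conditionS_iff Q hmonic]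
  constructor
  · intro h
    obtain ⟨w, hw⟩ := (map_zmod_eq_zero_iff 4 _).mp h
    rw [hw]
    exact Ideal.mul_mem_right w _ (Ideal.subset_span (by simp))
  · intro hmem
    obtain ⟨W, hW⟩ := (map_zmod_eq_zero_iff 2 _).mp (F_sub_Q_map2 Q)
    push_cast at hW
    rw [hW] at hmem
    have hWspan := (two_mul_mem_iff Q hirr.ne_zero W).mp hmem
    rw [Ideal.mem_span_singleton] at hWspan
    have hWb0 : W.map (Int.castRingHom (ZMod 2)) = 0 := by
      by_contra hne
      have hle := natDegree_le_of_dvd hWspan hne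
      have h1 : (Q.map (Int.castRingHom (ZMod 2))).natDegree = Q.natDegree :=
        hmonic.natDegree_map _
      have h2 : (W.map (Int.castRingHom (ZMod 2))).natDegree ≤ W.natDegree :=
        natDegree_map_le
      have h3 : (C 2 * W).natDegree < Q.natDegree := by
        rw [← hW]
        exact natDegree_F_sub_Q Q hmonic hr1
      have h4 : (C 2 * W).natDegree = W.natDegree :=
        natDegree_C_mul (by norm_num)
      omega
    obtain ⟨w, hw⟩ := (map_zmod_eq_zero_iff 2 _).mp hWb0
    push_cast at hw
    rw [map_zmod_eq_zero_iff]
    refine ⟨w, ?_⟩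
    rw [hW, hw]
    push_cast [hC4]
    ring

set_option maxHeartbeats 1000000 in
theorem stmt10 (Q : Polynomial ℤ) (r : ℕ) (hr : Q.natDegree = r)
    (hmonic : Q.Monic) (hconst : Odd (Q.coeff 0))
    (hirr : Irreducible (Q.map (Int.castRingHom (ZMod 2))))
    (lam : ℕ)
    (hlam : lam = orderOf (Ideal.Quotient.mk
      (Ideal.span {Q.map (Int.castRingHom (ZMod 2))}) (X : Polynomial (ZMod 2)))) :
    (X ^ lam + 1 ∈ Ideal.span ({C 4, Q} : Set (Polynomial ℤ))) ↔ conditionS Q := by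
  obtain ⟨m, hlam_odd, hm_odd, hlm, hXlam⟩ := K_facts Q r hr hmonic hconst hirr lam hlam
  have hr1 : 1 ≤ r := by
    have h := hirr.natDegree_pos
    rw [hmonic.natDegree_map, hr] at h
    omega
  set I : Ideal (Polynomial ℤ) := Ideal.span ({C 4, Q} : Set (Polynomial ℤ)) with hI
  set π : Polynomial ℤ →+* (Polynomial ℤ ⧸ I) := Ideal.Quotient.mk I with hπ
  set t : Polynomial ℤ ⧸ I := π X with ht
  have hQI : Q ∈ I := Ideal.subset_span (by simp)
  have hC4I : (C 4 : Polynomial ℤ) ∈ I := Ideal.subset_span (by simp)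
  have hπQ : π Q = 0 := Ideal.Quotient.eq_zero_iff_mem.mpr hQI
  have h4 : (4 : Polynomial ℤ ⧸ I) = 0 := by
    have h1 : (C (4 : ℤ) : Polynomial ℤ) = 4 := map_ofNat C 4
    rw [← map_ofNat π 4, ← h1]
    exact Ideal.Quotient.eq_zero_iff_mem.mpr hC4I
  have hC2 : (C (2 : ℤ) : Polynomial ℤ) = 2 := map_ofNat C 2
  -- odd power lemma
  have oddpow : ∀ (γ : Polynomial ℤ ⧸ I) (k : ℕ), Odd k → (1 + 2 * γ) ^ k = 1 + 2 * γ := by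
    intro γ k hk
    obtain ⟨j, rfl⟩ := hk
    have hsq : (1 + 2 * γ) ^ 2 = 1 := by
      have he : (1 + 2 * γ) ^ 2 = 1 + 4 * (γ + γ ^ 2) := by ring
      rw [he, h4]
      ring
    calc (1 + 2 * γ) ^ (2 * j + 1) = ((1 + 2 * γ) ^ 2) ^ j * (1 + 2 * γ) := by
          rw [← pow_mul, ← pow_succ]
      _ = 1 + 2 * γ := by rw [hsq, one_pow, one_mul]
  -- t ^ lam = 1 + 2 * γ
  have hmapXlam : (((X : Polynomial ℤ) ^ lam - 1).map (Int.castRingHom (ZMod 2)))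
      ∈ Ideal.span {Q.map (Int.castRingHom (ZMod 2))} := by
    rw [Polynomial.map_sub, Polynomial.map_pow, map_X, Polynomial.map_one]
    exact hXlam
  obtain ⟨b, c, hbc⟩ := lift_of_mem_span Q _ hmapXlam
  set γ : Polynomial ℤ ⧸ I := π c with hγ
  have ht_lam : t ^ lam = 1 + 2 * γ := by
    have h := congrArg π hbc
    rw [map_sub, map_pow, map_one, map_add, map_mul, map_mul, hπQ, zero_mul, zero_add,
      hC2] at h
    rw [← ht, map_ofNat π 2] at h
    linear_combination h
  -- t ^ (2 ^ r) = t * t ^ lam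
  have hT : t ^ (2 ^ r) = t * t ^ lam := by
    have h1 : t ^ (2 ^ r) = (t ^ lam) ^ m * t := by
      rw [← pow_mul, ← pow_succ, hlm]
    rw [h1, ht_lam, oddpow γ m hm_odd]
    ring
  -- t is a unit
  have hdivX := Polynomial.X_mul_divX_add Q
  have hXd : t * π Q.divX + π (C (Q.coeff 0)) = 0 := by
    have h := congrArg π hdivX
    rw [map_add, map_mul] at h
    rw [← ht] at h
    rw [h, hπQ]
  have hcc : π (C (Q.coeff 0)) * π (C (Q.coeff 0)) = 1 := by
    obtain ⟨j, hj⟩ := hconst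
    rw [← map_mul, ← C_mul]
    have he : (Q.coeff 0 * Q.coeff 0 : ℤ) = 1 + 4 * (j * j + j) := by
      rw [hj]; ring
    rw [he]
    have hsplit : (C (1 + 4 * (j * j + j)) : Polynomial ℤ) = 1 + C 4 * C (j * j + j) := by
      rw [C_add, C_mul, C_1]
    rw [hsplit, map_add, map_one, map_mul, Ideal.Quotient.eq_zero_iff_mem.mpr hC4I, zero_mul,
      add_zero]
  have hUnit : IsUnit t := by
    refine IsUnit.of_mul_eq_one (a := t) (π Q.divX * (-π (C (Q.coeff 0)))) ?_
    linear_combination (-(π (C (Q.coeff 0)))) * hXd + hcc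
  -- π = aeval t
  have hπaeval : ∀ p : Polynomial ℤ, π p = aeval t p := by
    intro p
    have halg : (Ideal.Quotient.mkₐ ℤ I : Polynomial ℤ →ₐ[ℤ] (Polynomial ℤ ⧸ I))
        = aeval t := by
      apply Polynomial.algHom_ext
      simp [Ideal.Quotient.mkₐ_eq_mk, aeval_X, ht, hπ]
    calc π p = (Ideal.Quotient.mkₐ ℤ I) p := by rw [Ideal.Quotient.mkₐ_eq_mk]
      _ = aeval t p := by rw [halg]
  set T : Polynomial ℤ ⧸ I := t ^ (2 ^ r) with hTdef
  have hA0 : (aeval T (evenP Q)) ^ 2 - T * (aeval T (oddP Q)) ^ 2 = 0 := by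
    have hmem := A_expand_mem Q r hr1
    have h0 : π (expand ℤ (2 ^ r) ((evenP Q) ^ 2 - X * (oddP Q) ^ 2)) = 0 :=
      Ideal.Quotient.eq_zero_iff_mem.mpr hmem
    rw [hπaeval, expand_eq_comp_X_pow, aeval_comp, map_pow, aeval_X] at h0
    rw [map_sub, map_pow, map_mul, map_pow, aeval_X] at h0
    exact h0
  have haeval_sub : ∀ (p : Polynomial ℤ) (z w : Polynomial ℤ ⧸ I),
      ∃ d, aeval z p - aeval w p = (z - w) * d := by
    intro p z w
    obtain ⟨d, hd⟩ := sub_dvd_eval_sub z w (p.map (algebraMap ℤ (Polynomial ℤ ⧸ I)))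
    refine ⟨d, ?_⟩
    rw [eval_map, eval_map] at hd
    rw [aeval_def, aeval_def]
    exact hd
  have hsq_eq : ∀ z w : Polynomial ℤ ⧸ I, (∃ d, z - w = 2 * d) → z ^ 2 = w ^ 2 := by
    rintro z w ⟨d, hd⟩
    have hz : z = w + 2 * d := by linear_combination hd
    rw [hz]
    have he : (w + 2 * d) ^ 2 = w ^ 2 + 4 * (w * d + d ^ 2) := by ring
    rw [he, h4]
    ring
  have hEneg : (aeval (-T) (evenP Q)) ^ 2 = (aeval T (evenP Q)) ^ 2 := by
    obtain ⟨d, hd⟩ := haeval_sub (evenP Q) (-T) T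
    exact hsq_eq _ _ ⟨-(T * d), by rw [hd]; ring⟩
  have hOneg : (aeval (-T) (oddP Q)) ^ 2 = (aeval T (oddP Q)) ^ 2 := by
    obtain ⟨d, hd⟩ := haeval_sub (oddP Q) (-T) T
    exact hsq_eq _ _ ⟨-(T * d), by rw [hd]; ring⟩
  have hFnegT : (aeval (-T) (evenP Q)) ^ 2 + (-T) * (aeval (-T) (oddP Q)) ^ 2 = 0 := by
    rw [hEneg, hOneg]
    linear_combination hA0
  -- derivative invertibility
  set F : Polynomial ℤ := (evenP Q) ^ 2 + X * (oddP Q) ^ 2 with hF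
  obtain ⟨W, hW⟩ := (map_zmod_eq_zero_iff 2 _).mp (F_sub_Q_map2 Q)
  push_cast at hW
  have hders : derivative F = derivative Q + C 2 * derivative W := by
    have hFQ : F = Q + C 2 * W := by rw [hF, ← hW]; ring
    rw [hFQ, derivative_add, derivative_C_mul]
  have hsep : (Q.map (Int.castRingHom (ZMod 2))).Separable :=
    PerfectField.separable_of_irreducible hirr
  obtain ⟨u, v, huv⟩ := hsep
  obtain ⟨U, rfl⟩ := Polynomial.map_surjective _ surj2 u
  obtain ⟨V, rfl⟩ := Polynomial.map_surjective _ surj2 v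
  have hUV0 : ((U * Q + V * derivative Q - 1 : Polynomial ℤ)).map
      (Int.castRingHom (ZMod 2)) = 0 := by
    rw [Polynomial.map_sub, Polynomial.map_add, Polynomial.map_mul, Polynomial.map_mul,
      Polynomial.map_one, ← derivative_map, huv, sub_self]
  obtain ⟨cD, hcD⟩ := (map_zmod_eq_zero_iff 2 _).mp hUV0
  push_cast at hcD
  have hQd : π V * π (derivative Q) = 1 + 2 * π cD := by
    have h := congrArg π hcD
    rw [map_sub, map_add, map_mul, map_mul, map_one, map_mul, hπQ, mul_zero, zero_add,
      hC2, map_ofNat π 2] at h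
    linear_combination h
  have hDg : π (derivative F) * π V
      = 1 + 2 * (π cD + π (derivative W) * π V) := by
    rw [hders, map_add π, map_mul π, hC2, map_ofNat π 2]
    linear_combination hQd
  -- condition S is equivalent to F(t) = 0
  have hSF : conditionS Q ↔ aeval t F = 0 := by
    rw [S_iff_mem Q hmonic hirr, ← Ideal.Quotient.eq_zero_iff_mem]
    show π (F - Q) = 0 ↔ _
    rw [map_sub, hπQ, sub_zero, hπaeval]
  have hfwd : T = -t → aeval t F = 0 := by
    intro hTeq
    have hty : t = -T := by rw [hTeq]; ring
    rw [hF, map_add, map_pow, map_mul, map_pow, aeval_X, hty]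
    exact hFnegT
  have hbwd : aeval t F = 0 → T = -t := by
    intro hF0
    have hTt : T = t + 2 * (t * γ) := by
      rw [hT, ht_lam]
      ring
    set δ : Polynomial ℤ ⧸ I := -T - t with hδ
    have hδ2 : δ = 2 * (-t - t * γ) := by rw [hδ, hTt]; ring
    obtain ⟨k, hk⟩ := Polynomial.binomExpansion (F.map (algebraMap ℤ (Polynomial ℤ ⧸ I))) t δ
    have h1 : t + δ = -T := by rw [hδ]; ring
    have heval1 : (F.map (algebraMap ℤ (Polynomial ℤ ⧸ I))).eval (t + δ) = 0 := by
      rw [h1, eval_map, ← aeval_def, hF, map_add, map_pow, map_mul, map_pow, aeval_X]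
      exact hFnegT
    have heval2 : (F.map (algebraMap ℤ (Polynomial ℤ ⧸ I))).eval t = 0 := by
      rw [eval_map, ← aeval_def]
      exact hF0
    have hder : (F.map (algebraMap ℤ (Polynomial ℤ ⧸ I))).derivative.eval t
        = π (derivative F) := by
      rw [derivative_map, eval_map, ← aeval_def, hπaeval]
    have hδsq : δ ^ 2 = 0 := by
      rw [hδ2]
      have he : (2 * (-t - t * γ)) ^ 2 = 4 * ((-t - t * γ) ^ 2) := by ring
      rw [he, h4, zero_mul]
    rw [heval1, heval2, hder, hδsq] at hk
    have hmain : 2 * (π (derivative F) * (-t - t * γ)) = 0 := by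
      have hd : π (derivative F) * δ = 2 * (π (derivative F) * (-t - t * γ)) := by
        rw [hδ2]; ring
      rw [← hd]
      linear_combination -hk
    have hx : 2 * (-t - t * γ) = 0 := by
      linear_combination (π V) * hmain + (-(2 * (-t - t * γ))) * hDg +
        (-((-t - t * γ) * (π cD + π (derivative W) * π V))) * h4
    have hδ0 : δ = 0 := by rw [hδ2, hx]
    rw [hδ] at hδ0
    linear_combination -hδ0
  have hTiff : t ^ lam = -1 ↔ T = -t := by
    constructor
    · intro h
      rw [hT, h]
      ring
    · intro h
      have h2 : t * t ^ lam = t * (-1) := by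
        rw [← hT, h]
        ring
      exact hUnit.mul_left_cancel h2
  have hmem_iff : (X ^ lam + 1 ∈ I) ↔ t ^ lam = -1 := by
    rw [← Ideal.Quotient.eq_zero_iff_mem]
    show π (X ^ lam + 1) = 0 ↔ _
    rw [map_add, map_pow, map_one, ← ht]
    constructor
    · intro h
      linear_combination h
    · intro h
      linear_combination h
  rw [hmem_iff, hTiff, hSF]
  exact ⟨hfwd, hbwd⟩
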